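/- With the hypotheses and notation of the extended row lemma setup, let k, t be natural numbers with 1 ≤ k ≤ t ≤ n and set x_k = σ_1 + τ_1 + (k − 1), σ' = (σ_1 + k, σ_2), τ' = (τ_1 + k, τ_2). Then φ^n_t(x_k; σ, τ) · ⟨x_k; τ_1 + σ_1 + n⟩_k = φ^{n−k}_{t−k}(x_k; σ', τ') · ⟨x_k; τ_2 + σ_2 + n − k⟩_k. -/

import Mathlib

open Finset

/-- `rowA n s a b t1 t2 x` is the quantity `A^n_s(j; σ, τ)(x)` of the row-lemma setup, where
`a = σ_j`, `b = σ_{3−j}`, and `(t1, t2) = (τ_1, τ_2)`: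
`∏_{k=1}^{n−s} ((−k) − x)/(−k) · ((b − a + (k−1) − s) − x)/(b − a + (k−1) − s) ·
((t1 + a + (k−1) + s) − x)/(t1 + a + (k−1) + s) · ((t2 + a + (k−1) + s) − x)/(t2 + a + (k−1) + s)`. -/
noncomputable def rowA {F : Type*} [Field F] (n s : ℕ) (a b t1 t2 x : F) : F :=
  ∏ k ∈ Finset.Icc 1 (n - s),
    (((-(k : F)) - x) / (-(k : F))) *
    (((b - a + ((k : F) - 1) - (s : F)) - x) / (b - a + ((k : F) - 1) - (s : F))) *
    (((t1 + a + ((k : F) - 1) + (s : F)) - x) / (t1 + a + ((k : F) - 1) + (s : F))) *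
    (((t2 + a + ((k : F) - 1) + (s : F)) - x) / (t2 + a + ((k : F) - 1) + (s : F)))

/-- `φ^n_t(x; σ, τ) = A^n_t(1; σ, τ)(x) · A^n_{n−t}(2; σ, τ)(x)` with `σ = (s1, s2)`,
`τ = (t1, t2)`. -/
noncomputable def rowPhi {F : Type*} [Field F] (n t : ℕ) (s1 s2 t1 t2 x : F) : F :=
  rowA n t s1 s2 t1 t2 x * rowA n (n - t) s2 s1 t1 t2 x

/-- `Φ_n(x; σ, τ) = Σ_{t=0}^{n} φ^n_t(x; σ, τ)`. -/
noncomputable def rowPhiSum {F : Type*} [Field F] (n : ℕ) (s1 s2 t1 t2 x : F) : F :=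
  ∑ t ∈ Finset.range (n + 1), rowPhi n t s1 s2 t1 t2 x

/-- The Pochhammer-type product `⟨x; a⟩_j = ∏_{i=0}^{j−1} (a + i − x)/(a + i)`. -/
noncomputable def ab {F : Type*} [Field F] (x a : F) (j : ℕ) : F :=
  ∏ i ∈ Finset.range j, (a + (i : F) - x) / (a + (i : F))

/-- **Recursion step (equation (5.6)) in the proof of the row lemma.**
Under the extended row-lemma hypotheses, for `1 ≤ k ≤ t ≤ n`,
`x_k = σ_1 + τ_1 + (k − 1)`, `σ' = (σ_1 + k, σ_2)`, `τ' = (τ_1 + k, τ_2)`: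
`φ^n_t(x_k; σ, τ) · ⟨x_k; τ_1 + σ_1 + n⟩_k
  = φ^{n−k}_{t−k}(x_k; σ', τ') · ⟨x_k; τ_2 + σ_2 + n − k⟩_k`. -/
noncomputable def G {F : Type*} [Field F] (a : F) (m : ℕ) : F := ∏ i ∈ Finset.range m, (a + i)

lemma G_add {F : Type*} [Field F] (a : F) (p q : ℕ) : G a (p + q) = G a p * G (a + p) q := by
  unfold G
  rw [Finset.prod_range_add]
  congr 1
  exact Finset.prod_congr rfl fun i _ => by push_cast; ring

lemma G_reflect {F : Type*} [Field F] (a : F) (k : ℕ) :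
    G a k = (-1)^k * G (1 - k - a) k := by
  unfold G
  rw [← Finset.prod_range_reflect (fun i => a + (i:F)) k,
    show ((-1:F))^k = ∏ _i ∈ Finset.range k, (-1:F) from by simp, ← Finset.prod_mul_distrib]
  refine Finset.prod_congr rfl fun i hi => ?_
  rw [Finset.mem_range] at hi
  rw [Nat.cast_sub (by omega), Nat.cast_sub (by omega)]
  push_cast
  ring

lemma G_ne_zero {F : Type*} [Field F] {a : F} {m : ℕ} (h : ∀ i < m, a + i ≠ 0) : G a m ≠ 0 := by
  unfold G
  rw [Finset.prod_ne_zero_iff]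
  exact fun i hi => h i (Finset.mem_range.mp hi)

lemma G_split {F : Type*} [Field F] (a c : F) (p q r : ℕ) (h : p = q + r)
    (h2 : a + (q:F) = c) : G a p = G a q * G c r := by
  subst h; rw [G_add, h2]

lemma G_swap {F : Type*} [Field F] (a b c : F) (p q : ℕ) (hb : a + (p:F) = b)
    (hc : a + (q:F) = c) : G a p * G b q = G a q * G c p := by
  subst hb hc; rw [← G_add, ← G_add, Nat.add_comm]

lemma G_reflect' {F : Type*} [Field F] (a b : F) (k : ℕ) (h : 1 - (k:F) - a = b) :
    G a k = (-1)^k * G b k := by subst h; exact G_reflect a k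

lemma ab_eq_G {F : Type*} [Field F] (x a : F) (j : ℕ) : ab x a j = G (a - x) j / G a j := by
  unfold ab G
  rw [← Finset.prod_div_distrib]
  exact Finset.prod_congr rfl fun i _ => by ring_nf

lemma rowA_eq_G {F : Type*} [Field F] (n s : ℕ) (a b c d x : F) :
    rowA n s a b c d x =
      (G (1+x) (n-s) * G (b-a-s-x) (n-s) * G (c+a+s-x) (n-s) * G (d+a+s-x) (n-s)) /
      (G 1 (n-s) * G (b-a-s) (n-s) * G (c+a+s) (n-s) * G (d+a+s) (n-s)) := by
  unfold rowA G
  rw [show Finset.Icc 1 (n-s) = Finset.Ico 1 (n-s+1) from by rw [Finset.Ico_add_one_right_eq_Icc],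
    Finset.prod_Ico_eq_prod_range]
  simp only [Nat.add_sub_cancel]
  conv_rhs => rw [← Finset.prod_mul_distrib, ← Finset.prod_mul_distrib, ← Finset.prod_mul_distrib,
    ← Finset.prod_mul_distrib, ← Finset.prod_mul_distrib, ← Finset.prod_mul_distrib,
    ← Finset.prod_div_distrib]
  refine Finset.prod_congr rfl fun i _ => ?_
  rw [div_mul_div_comm, div_mul_div_comm, div_mul_div_comm]
  rw [show (-↑(1 + i) - x) * (b - a + ((↑(1+i):F) - 1) - ↑s - x) * (c + a + ((↑(1+i):F) - 1) + ↑s - x) *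
        (d + a + ((↑(1+i):F) - 1) + ↑s - x) =
      -((1 + x + ↑i) * (b - a - ↑s - x + ↑i) * (c + a + ↑s - x + ↑i) * (d + a + ↑s - x + ↑i)) from by
        push_cast; ring,
    show (-↑(1+i):F) * (b - a + ((↑(1+i):F) - 1) - ↑s) * (c + a + ((↑(1+i):F) - 1) + ↑s) * (d + a + ((↑(1+i):F) - 1) + ↑s) =
      -((1 + ↑i) * (b - a - ↑s + ↑i) * (c + a + ↑s + ↑i) * (d + a + ↑s + ↑i)) from by
        push_cast; ring,
    neg_div_neg_eq]

set_option maxHeartbeats 2000000 in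
theorem row_lemma_recursion {F : Type*} [Field F] [CharZero F] (n : ℕ) (s1 s2 t1 t2 : F)
    (h1 : ∀ m : ℕ, m < 2 * n →
      (s1 + t1 + (m : F) ≠ 0 ∧ s1 + t2 + (m : F) ≠ 0 ∧
       s2 + t1 + (m : F) ≠ 0 ∧ s2 + t2 + (m : F) ≠ 0))
    (h2 : ∀ m : ℤ, -(n : ℤ) ≤ m → m ≤ (n : ℤ) - 1 → s1 - s2 + (m : F) ≠ 0)
    (h3 : ∀ m : ℤ, -(n : ℤ) ≤ m → m ≤ (n : ℤ) - 1 → t1 - t2 + (m : F) ≠ 0)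
    (k t : ℕ) (hk1 : 1 ≤ k) (hkt : k ≤ t) (htn : t ≤ n) :
    rowPhi n t s1 s2 t1 t2 (s1 + t1 + ((k : F) - 1)) *
        ab (s1 + t1 + ((k : F) - 1)) (t1 + s1 + (n : F)) k =
      rowPhi (n - k) (t - k) (s1 + (k : F)) s2 (t1 + (k : F)) t2 (s1 + t1 + ((k : F) - 1)) *
        ab (s1 + t1 + ((k : F) - 1)) (t2 + s2 + (n : F) - (k : F)) k := by
  unfold rowPhi
  rw [rowA_eq_G, rowA_eq_G, rowA_eq_G, rowA_eq_G, ab_eq_G, ab_eq_G]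
  rw [Nat.sub_sub_self htn, show n-k-(t-k) = n-t from by omega, show n-k-(n-t) = t-k from by omega,
    Nat.cast_sub htn, Nat.cast_sub hkt]
  ring_nf
  have hkn : k ≤ n := le_trans hkt htn
  have hL1 : G (1:F) (n-t) ≠ 0 := G_ne_zero fun i hi => by
    intro hc; exact Nat.cast_ne_zero.mpr (Nat.succ_ne_zero i) (by push_cast; linear_combination hc)
  have hL5 : G (1:F) t ≠ 0 := G_ne_zero fun i hi => by
    intro hc; exact Nat.cast_ne_zero.mpr (Nat.succ_ne_zero i) (by push_cast; linear_combination hc)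
  have hR5 : G (1:F) (t-k) ≠ 0 := G_ne_zero fun i hi => by
    intro hc; exact Nat.cast_ne_zero.mpr (Nat.succ_ne_zero i) (by push_cast; linear_combination hc)
  have hL2 : G (-s1+(s2-(t:F))) (n-t) ≠ 0 := G_ne_zero fun i hi => by
    intro hc; exact h2 ((t:ℤ)-i) (by omega) (by omega) (by push_cast; linear_combination -hc)
  have hL3 : G (s1+t1+(t:F)) (n-t) ≠ 0 := G_ne_zero fun i hi => by
    intro hc; exact (h1 (t+i) (by omega)).1 (by push_cast; linear_combination hc)
  have hL4 : G (s1+(t:F)+t2) (n-t) ≠ 0 := G_ne_zero fun i hi => by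
    intro hc; exact (h1 (t+i) (by omega)).2.1 (by push_cast; linear_combination hc)
  have hL6 : G (s1-s2+((t:F)-(n:F))) t ≠ 0 := G_ne_zero fun i hi => by
    intro hc; exact h2 ((t:ℤ)-n+i) (by omega) (by omega) (by push_cast; linear_combination hc)
  have hL7 : G (t1+(s2-(t:F))+(n:F)) t ≠ 0 := G_ne_zero fun i hi => by
    intro hc
    exact (h1 (n-t+i) (by omega)).2.2.1 (by push_cast [Nat.cast_sub htn]; linear_combination hc)
  have hL8 : G (s2-(t:F)+t2+(n:F)) t ≠ 0 := G_ne_zero fun i hi => by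
    intro hc
    exact (h1 (n-t+i) (by omega)).2.2.2 (by push_cast [Nat.cast_sub htn]; linear_combination hc)
  have hL9 : G (s1+t1+(n:F)) k ≠ 0 := G_ne_zero fun i hi => by
    intro hc; exact (h1 (n+i) (by omega)).1 (by push_cast; linear_combination hc)
  have hR4 : G (s1+t1+(k:F)+(t:F)) (n-t) ≠ 0 := G_ne_zero fun i hi => by
    intro hc; exact (h1 (k+t+i) (by omega)).1 (by push_cast; linear_combination hc)
  have hR6 : G (s1+((k:F)-s2)+((t:F)-(n:F))) (t-k) ≠ 0 := G_ne_zero fun i hi => by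
    intro hc; exact h2 ((k:ℤ)+t-n+i) (by omega) (by omega) (by push_cast; linear_combination hc)
  have hR7 : G (t1+(k:F)+(s2-(t:F))+(n:F)) (t-k) ≠ 0 := G_ne_zero fun i hi => by
    intro hc
    exact (h1 (k+(n-t)+i) (by omega)).2.2.1 (by push_cast [Nat.cast_sub htn]; linear_combination hc)
  have hR8 : G (s2-(t:F)+t2+(n:F)) (t-k) ≠ 0 := G_ne_zero fun i hi => by
    intro hc
    exact (h1 ((n-t)+i) (by omega)).2.2.2 (by push_cast [Nat.cast_sub htn]; linear_combination hc)
  have hR9 : G (-(k:F)+s2+t2+(n:F)) k ≠ 0 := G_ne_zero fun i hi => by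
    intro hc
    exact (h1 ((n-k)+i) (by omega)).2.2.2 (by push_cast [Nat.cast_sub hkn]; linear_combination hc)
  have hRc : G (1-(k:F)+(t:F)) (n-t) ≠ 0 := G_ne_zero fun i hi => by
    intro hc; exact Nat.cast_ne_zero.mpr (Nat.succ_ne_zero (t-k+i)) (by push_cast; linear_combination hc + Nat.cast_sub (R := F) hkt)
  have hs1 : G (s1+t1+(k:F)) t = G (s1+t1+(k:F)) (t-k) * G (s1+t1+(t:F)) k :=
    G_split _ _ t (t-k) k (by omega) (by push_cast [Nat.cast_sub hkt]; ring)
  have hs2 : G (1-t1+(-(k:F)-s2)+((t:F)-(n:F))) t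
      = G (1-t1+(-(k:F)-s2)+((t:F)-(n:F))) k * G (1+(-t1-s2)+((t:F)-(n:F))) (t-k) :=
    G_split _ _ t k (t-k) (by omega) (by ring)
  have hs3 : G (1+(-s1-(k:F))+(s2-(t:F))+(n:F)) t
      = G (1+(-s1-(k:F))+(s2-(t:F))+(n:F)) k * G (1-s1+(s2-(t:F))+(n:F)) (t-k) :=
    G_split _ _ t k (t-k) (by omega) (by ring)
  have hs4 : G (1-s1+(-t1-(k:F))+(s2-(t:F))+t2+(n:F)) t
      = G (1-s1+(-t1-(k:F))+(s2-(t:F))+t2+(n:F)) (t-k) * G (1-s1+(-t1-(k:F)*2)+s2+t2+(n:F)) k :=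
    G_split _ _ t (t-k) k (by omega) (by push_cast [Nat.cast_sub hkt]; ring)
  have hd1 : G (1:F) t = G (1:F) (t-k) * G (1-(k:F)+(t:F)) k :=
    G_split _ _ t (t-k) k (by omega) (by push_cast [Nat.cast_sub hkt]; ring)
  have hd2 : G (s1-s2+((t:F)-(n:F))) t
      = G (s1-s2+((t:F)-(n:F))) k * G (s1+((k:F)-s2)+((t:F)-(n:F))) (t-k) :=
    G_split _ _ t k (t-k) (by omega) (by ring)
  have hd3 : G (t1+(s2-(t:F))+(n:F)) t
      = G (t1+(s2-(t:F))+(n:F)) k * G (t1+(k:F)+(s2-(t:F))+(n:F)) (t-k) :=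
    G_split _ _ t k (t-k) (by omega) (by ring)
  have hd4 : G (s2-(t:F)+t2+(n:F)) t
      = G (s2-(t:F)+t2+(n:F)) (t-k) * G (-(k:F)+s2+t2+(n:F)) k :=
    G_split _ _ t (t-k) k (by omega) (by push_cast [Nat.cast_sub hkt]; ring)
  have hr1 : G (1-t1+(-(k:F)-s2)+((t:F)-(n:F))) k = (-1)^k * G (t1+(s2-(t:F))+(n:F)) k :=
    G_reflect' _ _ k (by ring)
  have hr2 : G (s1-s2+((t:F)-(n:F))) k = (-1)^k * G (1+(-s1-(k:F))+(s2-(t:F))+(n:F)) k :=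
    G_reflect' _ _ k (by ring)
  have hRa : G (1-(k:F)+(t:F)) (n-t) * G (1-(k:F)+(n:F)) k
      = G (1-(k:F)+(t:F)) k * G (1+(t:F)) (n-t) :=
    G_swap _ _ _ (n-t) k (by push_cast [Nat.cast_sub htn]; ring) (by ring)
  have hRb : G (s1+t1+(t:F)) (n-t) * G (s1+t1+(n:F)) k
      = G (s1+t1+(t:F)) k * G (s1+t1+(k:F)+(t:F)) (n-t) :=
    G_swap _ _ _ (n-t) k (by push_cast [Nat.cast_sub htn]; ring) (by ring)
  have hRa' : G (1-(k:F)+(n:F)) k = G (1-(k:F)+(t:F)) k * G (1+(t:F)) (n-t) / G (1-(k:F)+(t:F)) (n-t) :=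
    (eq_div_iff hRc).mpr (by linear_combination hRa)
  have hRb' : G (s1+t1+(n:F)) k = G (s1+t1+(t:F)) k * G (s1+t1+(k:F)+(t:F)) (n-t) / G (s1+t1+(t:F)) (n-t) :=
    (eq_div_iff hL3).mpr (by linear_combination hRb)
  revert hL1 hL5 hR5 hL2 hL3 hL4 hL6 hL7 hL8 hL9 hR4 hR6 hR7 hR8 hR9 hRc hs1 hs2 hs3 hs4 hd1 hd2 hd3 hd4 hr1 hr2 hRa' hRb'
  ring_nf
  intro hL1 hL5 hR5 hL2 hL3 hL4 hL6 hL7 hL8 hL9 hR4 hR6 hR7 hR8 hR9 hRc hs1 hs2 hs3 hs4 hd1 hd2 hd3 hd4 hr1 hr2 hRa' hRb'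
  rw [hs1, hs2, hs3, hs4, hd1, hd2, hd3, hd4, hr1, hr2, hRa', hRb']
  rw [hd1] at hL5
  rw [hd2, hr2] at hL6
  rw [hd3] at hL7
  obtain ⟨-, hx1⟩ := mul_ne_zero_iff.mp hL5
  obtain ⟨hx2, -⟩ := mul_ne_zero_iff.mp hL6
  obtain ⟨-, hx3⟩ := mul_ne_zero_iff.mp hx2
  obtain ⟨hx4, -⟩ := mul_ne_zero_iff.mp hL7
  field_simp
  have hy1 : G (s1 + (t:F) + t1) k ≠ 0 := G_ne_zero fun i hi => by
    intro hc; exact (h1 (t+i) (by omega)).1 (by push_cast; linear_combination hc)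
  rw [div_eq_iff (mul_ne_zero hy1 (mul_ne_zero_iff.mp hx2).1)]
  ring
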